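/- Let q = 3^k with k ≥ 2 and let F_q be the field with q elements. Then there exists y ∈ F_q with y ∉ {0, 1, −1} such that y + 1 and y² + y are both nonzero non-squares in F_q. -/

import Mathlib

open Finset

lemma sum_zero_of_closed {F : Type*} [Field F] [DecidableEq F] (h3 : (3 : F) = 0) :
    ∀ (n : ℕ) (T : Finset F), T.card = n → (∀ x ∈ T, x + 1 ∈ T) → ∑ x ∈ T, x = 0 := by
  intro n
  induction n using Nat.strong_induction_on with
  | _ n ih =>
    intro T hcard hT
    rcases T.eq_empty_or_nonempty with rfl | ⟨a, ha⟩
    · simp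
    · have h2 : (2 : F) ≠ 0 := by
        intro h
        have h1 : (1 : F) = 0 := by linear_combination h3 - h
        exact one_ne_zero h1
      have ha1 : a + 1 ∈ T := hT a ha
      have ha2 : a + 1 + 1 ∈ T := hT _ ha1
      have d1 : a + 1 ≠ a := by simp
      have d2 : a + 1 + 1 ≠ a := fun h => h2 (by linear_combination h)
      have d3 : a + 1 + 1 ≠ a + 1 := by simp
      set T' := T \ {a, a + 1, a + 1 + 1} with hT'
      have hsub : {a, a + 1, a + 1 + 1} ⊆ T := by
        intro x hx
        simp only [mem_insert, mem_singleton] at hx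
        rcases hx with rfl | rfl | rfl <;> assumption
      have hnm1 : a ∉ ({a + 1, a + 1 + 1} : Finset F) := by
        simp only [mem_insert, mem_singleton]
        push_neg
        exact ⟨fun h => d1 h.symm, fun h => d2 h.symm⟩
      have hnm2 : (a + 1 : F) ∉ ({a + 1 + 1} : Finset F) := by
        simp only [mem_singleton]; exact fun h => d3 h.symm
      have hcard3 : ({a, a + 1, a + 1 + 1} : Finset F).card = 3 := by
        rw [card_insert_of_notMem hnm1, card_insert_of_notMem hnm2, card_singleton]
      have hcardT' : T'.card = T.card - 3 := by
        rw [hT', card_sdiff_of_subset hsub, hcard3]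
      have hclosed : ∀ x ∈ T', x + 1 ∈ T' := by
        intro x hx
        rw [hT', mem_sdiff] at hx ⊢
        refine ⟨hT x hx.1, ?_⟩
        intro hmem
        apply hx.2
        simp only [mem_insert, mem_singleton] at hmem ⊢
        rcases hmem with h | h | h
        · right; right; linear_combination h - h3
        · left; exact add_right_cancel h
        · right; left; exact add_right_cancel h
      have hpos : 0 < T.card := card_pos.mpr ⟨a, ha⟩
      have hlt : T.card - 3 < n := by omega
      have hsum' : ∑ x ∈ T', x = 0 := ih _ hlt T' hcardT' hclosed
      have := sum_sdiff hsub (f := fun x : F => x)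
      rw [← this, hsum', zero_add, sum_insert hnm1, sum_insert hnm2, sum_singleton]
      linear_combination h3 + a * h3

theorem exists_good_y_char_three
    (F : Type*) [Field F] [Fintype F]
    (k : ℕ) (hk : 2 ≤ k) (hcard : Fintype.card F = 3 ^ k) :
    ∃ y : F, y ∉ ({0, 1, -1} : Set F) ∧
      y + 1 ≠ 0 ∧ ¬IsSquare (y + 1) ∧
      y ^ 2 + y ≠ 0 ∧ ¬IsSquare (y ^ 2 + y) := by
  classical
  -- characteristic 3
  have hchar : CharP F (ringChar F) := ringChar.charP F
  obtain ⟨n, hp, hq⟩ := FiniteField.card F (ringChar F)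
  have hpd : ringChar F ∣ 3 ^ k := by
    rw [← hcard, hq]; exact dvd_pow_self _ n.2.ne'
  have hp3 : ringChar F = 3 :=
    (Nat.prime_dvd_prime_iff_eq hp Nat.prime_three).mp (hp.dvd_of_dvd_pow hpd)
  have h3 : (3 : F) = 0 := by
    have := ringChar.spec F 3
    rw [hp3] at this; exact this.mpr dvd_rfl
  have hch3 : CharP F 3 := hp3 ▸ hchar
  have h2 : (2 : F) ≠ 0 := fun h => one_ne_zero (α := F) (by linear_combination h3 - h)
  by_contra hcon
  -- the key closure property
  have key : ∀ s : F, s ≠ 0 → IsSquare s → s ≠ 1 → s ≠ -1 → IsSquare (s + 1) := by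
    intro s hs0 hsq hs1 hsm1
    by_contra hns
    have hs10 : s + 1 ≠ 0 := fun h => hsm1 (by linear_combination h)
    apply hcon
    refine ⟨s, ?_, hs10, hns, ?_, ?_⟩
    · simp only [Set.mem_insert_iff, Set.mem_singleton_iff]
      push_neg
      exact ⟨hs0, hs1, hsm1⟩
    · have : s ^ 2 + s = s * (s + 1) := by ring
      rw [this]
      exact mul_ne_zero hs0 hs10
    · intro hsq2
      apply hns
      have hrw : s + 1 = s⁻¹ * (s ^ 2 + s) := by
        field_simp
      rw [hrw]
      exact (hsq.inv).mul hsq2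
  -- the set of nonzero squares
  set S : Finset F := univ.filter (fun x => x ≠ 0 ∧ IsSquare x) with hS
  have memS : ∀ x : F, x ∈ S ↔ x ≠ 0 ∧ IsSquare x := by
    intro x; simp [hS]
  -- sum over S is zero
  have hsumS : ∑ x ∈ S, x = 0 := by
    -- find a square s₀ ∉ {0,1}
    have hbig : 3 < Fintype.card F := by
      rw [hcard]
      calc 3 < 3 ^ 2 := by norm_num
        _ ≤ 3 ^ k := Nat.pow_le_pow_right (by norm_num) hk
    obtain ⟨a, ha⟩ : ∃ a : F, a ∉ ({0, 1, -1} : Finset F) := by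
      by_contra hall
      push_neg at hall
      have : (univ : Finset F) ⊆ {0, 1, -1} := fun x _ => hall x
      have := card_le_card this
      simp only [card_univ] at this
      have c1 : ({1, -1} : Finset F).card ≤ 2 :=
        (card_insert_le _ _).trans (by simp)
      have h3c : ({0, 1, -1} : Finset F).card ≤ 3 :=
        (card_insert_le _ _).trans (by omega)
      omega
    simp only [mem_insert, mem_singleton] at ha
    push_neg at ha
    obtain ⟨ha0, ha1, ham1⟩ := ha
    set s₀ := a * a with hs₀
    have hs₀sq : IsSquare s₀ := ⟨a, rfl⟩
    have hs₀0 : s₀ ≠ 0 := mul_ne_zero ha0 ha0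
    have hs₀1 : s₀ ≠ 1 := by
      intro h
      have : (a - 1) * (a + 1) = 0 := by linear_combination h
      rcases mul_eq_zero.mp this with h' | h'
      · exact ha1 (by linear_combination h')
      · exact ham1 (by linear_combination h')
    have hbij : ∑ x ∈ S, (s₀ * x) = ∑ x ∈ S, x := by
      apply Finset.sum_nbij' (i := fun x => s₀ * x) (j := fun x => s₀⁻¹ * x)
      · intro x hx
        rw [memS] at hx ⊢
        exact ⟨mul_ne_zero hs₀0 hx.1, hs₀sq.mul hx.2⟩
      · intro x hx
        rw [memS] at hx ⊢
        exact ⟨mul_ne_zero (inv_ne_zero hs₀0) hx.1,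
          (hs₀sq.inv).mul hx.2⟩
      · intro x _; field_simp
      · intro x _; field_simp
      · intro x _; rfl
    rw [← Finset.mul_sum] at hbij
    have : (s₀ - 1) * (∑ x ∈ S, x) = 0 := by linear_combination hbij
    rcases mul_eq_zero.mp this with h' | h'
    · exact absurd (by linear_combination h') hs₀1
    · exact h'
  have h1S : (1 : F) ∈ S := (memS 1).mpr ⟨one_ne_zero, ⟨1, (mul_one 1).symm⟩⟩
  by_cases hm1 : IsSquare (-1 : F)
  · -- Case B : -1 is a square
    set U : Finset F := insert 0 S with hU
    have h0S : (0 : F) ∉ S := by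
      rw [memS]; simp
    have hUclosed : ∀ x ∈ U, x + 1 ∈ U := by
      intro x hx
      rw [hU, mem_insert] at hx
      rcases hx with rfl | hx
      · rw [zero_add, hU, mem_insert]; exact Or.inr h1S
      · rw [memS] at hx
        by_cases hx1 : x = -1
        · subst hx1
          rw [hU, mem_insert]; left; ring
        by_cases hx2 : x = 1
        · subst hx2
          rw [hU, mem_insert]; right
          rw [memS]
          constructor
          · intro h; exact h2 (by linear_combination h)
          · have : (1 : F) + 1 = -1 := by linear_combination h3
            rw [this]; exact hm1
        · rw [hU, mem_insert]; right
          rw [memS]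
          refine ⟨fun h => hx1 (by linear_combination h), key x hx.1 hx.2 hx2 hx1⟩
    -- the +1 map is a bijection of U, so card U ≡ 0 mod 3
    have hUbij : ∑ x ∈ U, (x + 1) = ∑ x ∈ U, x := by
      apply Finset.sum_nbij' (i := fun x => x + 1) (j := fun x => x + 1 + 1)
      · intro x hx; exact hUclosed x hx
      · intro x hx; exact hUclosed _ (hUclosed x hx)
      · intro x _; linear_combination h3
      · intro x _; linear_combination h3
      · intro x _; rfl
    rw [Finset.sum_add_distrib, Finset.sum_const, nsmul_eq_mul, mul_one] at hUbij
    have hUcast : (U.card : F) = 0 := by linear_combination hUbij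
    have hUdvd : 3 ∣ U.card := (CharP.cast_eq_zero_iff F 3 U.card).mp hUcast
    -- counting: card F = 1 + 2 * card S
    have hfibmem : ∀ x : F, x ∈ (univ : Finset F) → x * x ∈ U := by
      intro x _
      rcases eq_or_ne x 0 with rfl | hx
      · rw [hU, mem_insert]; left; ring
      · rw [hU, mem_insert]; right
        rw [memS]
        exact ⟨mul_ne_zero hx hx, ⟨x, rfl⟩⟩
    have hcnt := Finset.card_eq_sum_card_fiberwise hfibmem
    have hfib0 : (univ.filter (fun x : F => x * x = 0)).card = 1 := by
      have : (univ.filter (fun x : F => x * x = 0)) = {0} := by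
        ext x; simp [mul_self_eq_zero]
      rw [this, card_singleton]
    have hfibS : ∀ b ∈ S, (univ.filter (fun x : F => x * x = b)).card = 2 := by
      intro b hb
      rw [memS] at hb
      obtain ⟨hb0, c, rfl⟩ := hb
      have hc0 : c ≠ 0 := fun h => hb0 (by rw [h, mul_zero])
      have hcne : c ≠ -c := by
        intro h
        apply hc0
        have : (2 : F) * c = 0 := by linear_combination h
        rcases mul_eq_zero.mp this with h' | h'
        · exact absurd h' h2
        · exact h'
      have : (univ.filter (fun x : F => x * x = c * c)) = {c, -c} := by
        ext x
        simp only [mem_filter, mem_univ, true_and, mem_insert, mem_singleton]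
        constructor
        · intro h
          have : (x - c) * (x + c) = 0 := by linear_combination h
          rcases mul_eq_zero.mp this with h' | h'
          · left; linear_combination h'
          · right; linear_combination h'
        · rintro (rfl | rfl) <;> ring
      rw [this, card_insert_of_notMem (by simpa using hcne), card_singleton]
    rw [hU, sum_insert h0S, hfib0, Finset.sum_congr rfl hfibS, sum_const, smul_eq_mul, card_univ] at hcnt
    have hUcard : U.card = S.card + 1 := by
      rw [hU, card_insert_of_notMem h0S]
    have h3k : 3 ∣ 3 ^ k := dvd_pow_self 3 (by omega)
    rw [hcard] at hcnt
    omega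
  · -- Case A : -1 is not a square
    set T : Finset F := S.filter (fun x => x ≠ 1 ∧ x ≠ -1) with hT
    have hTclosed : ∀ x ∈ T, x + 1 ∈ T := by
      intro x hx
      rw [hT, mem_filter, memS] at hx ⊢
      obtain ⟨⟨hx0, hxsq⟩, hx1, hxm1⟩ := hx
      refine ⟨⟨fun h => hxm1 (by linear_combination h), key x hx0 hxsq hx1 hxm1⟩,
        fun h => hx0 (by linear_combination h), fun h => hx1 (by linear_combination h - h3)⟩
    have hsumT : ∑ x ∈ T, x = 0 := sum_zero_of_closed h3 T.card T rfl hTclosed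
    have hsplit := Finset.sum_filter_add_sum_filter_not S (fun x => x ≠ 1 ∧ x ≠ -1) (fun x : F => x)
    have hrest : S.filter (fun x => ¬(x ≠ 1 ∧ x ≠ -1)) = {1} := by
      ext x
      simp only [mem_filter, mem_singleton, not_and_or, not_not]
      constructor
      · rintro ⟨hxS, rfl | rfl⟩
        · rfl
        · exact absurd ((memS _).mp hxS).2 hm1
      · rintro rfl
        exact ⟨h1S, Or.inl rfl⟩
    rw [hrest, ← hT, hsumT, sum_singleton, zero_add, hsumS] at hsplit
    exact one_ne_zero hsplit
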